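/- arXiv:1504.03163 — 3 statements merged into one kernel-verified Lean document; each statement's English description precedes it below -/
import Mathlib

section
/- For every pair of natural numbers m, n ≥ 1, there is exactly one triple (a, b, c) in C satisfying both c − b = (2m − 1)² and c − a = 2n²; i.e., the intersection odd(m) ∩ even(n) is a singleton. -/
/-- Membership in the set `C`: Euclidean triples generated by `u > v ≥ 1` with `u − v` odd. -/
def InC (a b c : ℕ) : Prop :=
  ∃ u v : ℕ, 1 ≤ v ∧ v < u ∧ Odd (u - v) ∧
    a = u ^ 2 - v ^ 2 ∧ b = 2 * u * v ∧ c = u ^ 2 + v ^ 2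

/-- For every `m, n ≥ 1` there is exactly one triple `(a, b, c)` in `C` with
`c − b = (2m − 1)²` and `c − a = 2n²`: the intersection `odd(m) ∩ even(n)` is a singleton. -/
theorem odd_inter_even_singleton (m n : ℕ) (hm : 1 ≤ m) (hn : 1 ≤ n) :
    ∃! t : ℕ × ℕ × ℕ, InC t.1 t.2.1 t.2.2 ∧
      t.2.2 - t.2.1 = (2 * m - 1) ^ 2 ∧ t.2.2 - t.1 = 2 * n ^ 2 := by
  have hk : 2 * m - 1 = 2 * (m - 1) + 1 := by omega
  refine ⟨((n + (2 * m - 1)) ^ 2 - n ^ 2, 2 * (n + (2 * m - 1)) * n,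
      (n + (2 * m - 1)) ^ 2 + n ^ 2), ⟨⟨n + (2 * m - 1), n, hn, by omega, ?_, rfl, rfl, rfl⟩,
      ?_, ?_⟩, ?_⟩
  · have : n + (2 * m - 1) - n = 2 * m - 1 := by omega
    rw [this]
    exact ⟨m - 1, by omega⟩
  · have h : (n + (2 * m - 1)) ^ 2 + n ^ 2 =
        2 * (n + (2 * m - 1)) * n + (2 * m - 1) ^ 2 := by ring
    simp only
    omega
  · have h : n ^ 2 ≤ (n + (2 * m - 1)) ^ 2 :=
      Nat.pow_le_pow_left (by omega) 2
    simp only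
    omega
  · rintro ⟨a, b, c⟩ ⟨⟨u, v, hv, hvu, hodd, ha, hb, hc⟩, h1, h2⟩
    have hvv : v ^ 2 ≤ u ^ 2 := Nat.pow_le_pow_left (le_of_lt hvu) 2
    subst ha hb hc
    -- c - a = 2 v²
    have hv2 : v ^ 2 = n ^ 2 := by simp only at h2; omega
    have hvn : v = n := Nat.pow_left_injective (by norm_num) hv2
    -- c - b = (u - v)²
    have hueq : u = v + (u - v) := by omega
    have hexp : (v + (u - v)) ^ 2 + v ^ 2 = 2 * (v + (u - v)) * v + (u - v) ^ 2 := by ring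
    have hd2 : (u - v) ^ 2 = (2 * m - 1) ^ 2 := by
      simp only at h1
      rw [hueq] at h1
      omega
    have hd : u - v = 2 * m - 1 := Nat.pow_left_injective (by norm_num) hd2
    have hu : u = n + (2 * m - 1) := by omega
    subst hvn hu
    rfl
end

section
/- For natural numbers m, n ≥ 1, the unique triple (a, b, c) in C with c − b = (2m − 1)² and c − a = 2n² is given by the explicit formulas a = 4m² − 4m + 1 + 4nm − 2n, b = 2n² − 2n + 4nm, and c = 2n² − 2n + 4nm + 4m² − 4m + 1. -/
set_option maxHeartbeats 1000000 in
/-- For `m, n ≥ 1`, any triple in `C` with `c − b = (2m − 1)²` and `c − a = 2n²` is given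
by the explicit Diophantine formulas. -/
theorem triple_explicit_formulas (m n a b c : ℕ) (hm : 1 ≤ m) (hn : 1 ≤ n)
    (hC : InC a b c)
    (hodd : c - b = (2 * m - 1) ^ 2) (heven : c - a = 2 * n ^ 2) :
    a = 4 * m ^ 2 - 4 * m + 1 + 4 * n * m - 2 * n ∧
    b = 2 * n ^ 2 - 2 * n + 4 * n * m ∧
    c = 2 * n ^ 2 - 2 * n + 4 * n * m + 4 * m ^ 2 - 4 * m + 1 := by
  obtain ⟨u, v, hv1, hvu, -, ha, hb, hc⟩ := hC
  have hvu' : v ≤ u := le_of_lt hvu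
  have hsq : v ^ 2 ≤ u ^ 2 := Nat.pow_le_pow_left hvu' 2
  have hble : 2 * u * v ≤ u ^ 2 + v ^ 2 := by nlinarith
  have h1 : (u - v) ^ 2 = (2 * m - 1) ^ 2 := by
    rw [← hodd, hb, hc]
    zify [hvu', hble]
    ring
  have huv : u - v = 2 * m - 1 := Nat.pow_left_injective (by norm_num) h1
  have h2 : 2 * v ^ 2 = 2 * n ^ 2 := by
    rw [← heven, ha, hc]; omega
  have hvn : v = n := by
    have : v ^ 2 = n ^ 2 := by omega
    exact Nat.pow_left_injective (by norm_num) this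
  have hu : u = 2 * m - 1 + n := by omega
  subst hvn hu ha hb hc
  have h4 : 4 * m ≤ 4 * m ^ 2 := by nlinarith
  have h1m : 1 ≤ 2 * m := by omega
  have hn2 : 2 * v ≤ 2 * v ^ 2 := by nlinarith
  have hc4 : 4 * m ≤ 2 * v ^ 2 - 2 * v + 4 * v * m + 4 * m ^ 2 :=
    le_trans h4 (Nat.le_add_left _ _)
  have h2n : 2 * v ≤ 4 * m ^ 2 - 4 * m + 1 + 4 * v * m :=
    le_trans (show 2 * v ≤ 4 * v * m by nlinarith) (Nat.le_add_left _ _)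
  clear hodd heven h1 huv hble h2 hvu hvu'
  refine ⟨?_, by zify [h1m, hn2]; ring, by zify [h1m, h4, hn2, hc4]; ring⟩
  zify [h1m, h4, h2n, hsq]
  ring
end

section
/- For natural numbers m, n ≥ 1, the Pythagorean triple 𝔓(m, n) is primitive if and only if n and 2m − 1 are relatively prime, i.e., gcd(n, 2m − 1) = 1. -/
/-- The parameterisation `𝔓(m, n)` of Pythagorean triples. -/
def frakP (m n : ℕ) : ℕ × ℕ × ℕ :=
  (4 * m ^ 2 - 4 * m + 1 + 4 * n * m - 2 * n,
   2 * n ^ 2 - 2 * n + 4 * n * m,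
   2 * n ^ 2 - 2 * n + 4 * n * m + 4 * m ^ 2 - 4 * m + 1)

lemma frakP_key (j n : ℕ) (hn : 1 ≤ n) :
    Nat.gcd ((2*j+1) * ((2*j+1) + 2*n))
      (Nat.gcd (2*n*(n + (2*j+1))) (n^2 + (n + (2*j+1))^2)) = 1 ↔
      Nat.gcd n (2*j+1) = 1 := by
  set k := 2*j+1 with hk
  constructor
  · intro h
    by_contra hne
    obtain ⟨p, hp, hpd⟩ := Nat.exists_prime_and_dvd hne
    have hpn : p ∣ n := hpd.trans (Nat.gcd_dvd_left _ _)
    have hpk : p ∣ k := hpd.trans (Nat.gcd_dvd_right _ _)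
    have h1 : p ∣ k * (k + 2*n) := dvd_mul_of_dvd_left hpk _
    have h2 : p ∣ 2*n*(n + k) := dvd_mul_of_dvd_right (dvd_add hpn hpk) _
    have h3 : p ∣ n^2 + (n + k)^2 :=
      dvd_add (dvd_pow hpn two_ne_zero) (dvd_pow (dvd_add hpn hpk) two_ne_zero)
    have := Nat.dvd_gcd h1 (Nat.dvd_gcd h2 h3)
    rw [h] at this
    exact hp.one_lt.ne' (Nat.dvd_one.mp this)
  · intro h
    by_contra hne
    obtain ⟨p, hp, hpd⟩ := Nat.exists_prime_and_dvd hne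
    have hpa : p ∣ k * (k + 2*n) := hpd.trans (Nat.gcd_dvd_left _ _)
    have hpb : p ∣ 2*n*(n + k) :=
      hpd.trans ((Nat.gcd_dvd_right _ _).trans (Nat.gcd_dvd_left _ _))
    have hpc : p ∣ n^2 + (n + k)^2 :=
      hpd.trans ((Nat.gcd_dvd_right _ _).trans (Nat.gcd_dvd_right _ _))
    have hcb : n^2 + (n + k)^2 = 2*n*(n + k) + k^2 := by ring
    have hpk2 : p ∣ k^2 := (Nat.dvd_add_right hpb).mp (hcb ▸ hpc)
    have hpk : p ∣ k := hp.dvd_of_dvd_pow hpk2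
    have hpodd : p ≠ 2 := by
      rintro rfl
      omega
    have hpn : p ∣ n := by
      rcases (Nat.Prime.dvd_mul hp).mp hpb with h' | h'
      · rcases (Nat.Prime.dvd_mul hp).mp h' with h'' | h''
        · exact absurd ((Nat.prime_dvd_prime_iff_eq hp Nat.prime_two).mp h'') hpodd
        · exact h''
      · have : p ∣ n + k - k := Nat.dvd_sub h' hpk
        simpa using this
    have := Nat.dvd_gcd hpn hpk
    rw [h] at this
    exact hp.one_lt.ne' (Nat.dvd_one.mp this)

/-- For `m, n ≥ 1`, the Pythagorean triple `𝔓(m, n)` is primitive if and only if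
`n` and `2m − 1` are relatively prime. -/
theorem frakP_primitive_iff (m n : ℕ) (hm : 1 ≤ m) (hn : 1 ≤ n) :
    Nat.gcd (frakP m n).1 (Nat.gcd (frakP m n).2.1 (frakP m n).2.2) = 1 ↔
      Nat.gcd n (2 * m - 1) = 1 := by
  obtain ⟨j, rfl⟩ : ∃ j, m = j + 1 := ⟨m - 1, by omega⟩
  have e1 : 4 * (j+1) ≤ 4 * (j+1) ^ 2 := by nlinarith
  have e2 : 2 * n ≤ 4 * (j+1) ^ 2 - 4 * (j+1) + 1 + 4 * n * (j+1) := by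
    have : 2 * n ≤ 4 * n * (j+1) := by nlinarith
    omega
  have e3 : 2 * n ≤ 2 * n ^ 2 := by nlinarith
  have ha : (frakP (j+1) n).1 = (2*j+1) * ((2*j+1) + 2*n) := by
    simp only [frakP]
    zify [e1, e2]
    ring
  have hb : (frakP (j+1) n).2.1 = 2*n*(n + (2*j+1)) := by
    simp only [frakP]
    zify [e3]
    ring
  have e4 : 4 * (j+1) ≤ 2 * n ^ 2 - 2 * n + 4 * n * (j+1) + 4 * (j+1) ^ 2 := by omega
  have hc : (frakP (j+1) n).2.2 = n^2 + (n + (2*j+1))^2 := by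
    simp only [frakP]
    zify [e3, e4]
    ring
  have hm1 : 2 * (j+1) - 1 = 2*j+1 := by omega
  rw [ha, hb, hc, hm1]
  exact frakP_key j n hn
end
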